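/- Let T_1,...,T_s be i.i.d. geometric random variables on ℕ with success probability θ ∈ (0,1). Then the expectation of their maximum satisfies |E[max_i T_i] − (1/2 + (1/log(1/(1−θ))) ∑_{i=1}^{s} 1/i)| ≤ 1/2. -/

import Mathlib

open MeasureTheory ProbabilityTheory
open scoped ENNReal

section EisenbergAux

open Finset Set Real

private lemma binom_harmonic_aux (n : ℕ) :
    ∑ j ∈ Finset.range (n+1), (-1:ℝ)^(j+1) * (n.choose j) / j
      = ∑ i ∈ Finset.range n, 1/((i:ℝ)+1) := by
  have shift : ∀ m : ℕ, ∑ j ∈ Finset.range (m+1), (-1:ℝ)^(j+1) * (m.choose j) / j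
      = ∑ j ∈ Finset.range m, (-1:ℝ)^j * (m.choose (j+1)) / (j+1) := by
    intro m
    rw [Finset.sum_range_succ']
    simp [pow_succ]
  induction n with
  | zero => simp
  | succ n ih =>
    rw [shift, Finset.sum_range_succ (fun i => 1/((i:ℝ)+1)), ← ih, shift]
    have expand : ∑ j ∈ Finset.range (n+1), (-1:ℝ)^j * ((n+1).choose (j+1)) / (j+1)
        = (∑ j ∈ Finset.range (n+1), (-1:ℝ)^j * (n.choose (j+1)) / (j+1))
          + ∑ j ∈ Finset.range (n+1), (-1:ℝ)^j * (n.choose j) / (j+1) := by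
      rw [← Finset.sum_add_distrib]
      refine Finset.sum_congr rfl fun j _ => ?_
      rw [Nat.choose_succ_succ]
      push_cast
      ring
    have drop : ∑ j ∈ Finset.range (n+1), (-1:ℝ)^j * (n.choose (j+1)) / (j+1)
        = ∑ j ∈ Finset.range n, (-1:ℝ)^j * (n.choose (j+1)) / (j+1) := by
      rw [Finset.sum_range_succ]
      simp [Nat.choose_succ_self]
    have key : ∑ j ∈ Finset.range (n+1), (-1:ℝ)^j * (n.choose j) / (j+1) = 1/((n:ℝ)+1) := by
      have hterm : ∀ j ∈ Finset.range (n+1), (-1:ℝ)^j * (n.choose j) / (j+1)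
          = (1/((n:ℝ)+1)) * ((-1:ℝ)^j * ((n+1).choose (j+1))) := by
        intro j hj
        have h := Nat.add_one_mul_choose_eq n j
        have h' : ((n:ℝ)+1) * (n.choose j) = ((n+1).choose (j+1)) * (j+1) := by
          exact_mod_cast congrArg (Nat.cast : ℕ → ℝ) h
        have e : (n.choose j : ℝ)/((j:ℝ)+1) = ((n+1).choose (j+1) : ℝ)/((n:ℝ)+1) := by
          rw [div_eq_div_iff (by positivity) (by positivity)]
          linarith
        rw [mul_div_assoc, e]
        ring
      rw [Finset.sum_congr rfl hterm, ← Finset.mul_sum]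
      have halt : ∑ j ∈ Finset.range (n+1), (-1:ℝ)^j * ((n+1).choose (j+1)) = 1 := by
        have h0 : ∑ j ∈ Finset.range (n+2), (-1:ℝ)^j * ((n+1).choose j) = 0 := by
          have := Int.alternating_sum_range_choose_of_ne (n := n+1) (by omega)
          exact_mod_cast congrArg (Int.cast : ℤ → ℝ) this
        rw [Finset.sum_range_succ'] at h0
        simp only [pow_zero, Nat.choose_zero_right, Nat.cast_one, one_mul] at h0
        have hneg : ∑ j ∈ Finset.range (n+1), (-1:ℝ)^(j+1) * ((n+1).choose (j+1))
            = -∑ j ∈ Finset.range (n+1), (-1:ℝ)^j * ((n+1).choose (j+1)) := by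
          rw [← Finset.sum_neg_distrib]
          refine Finset.sum_congr rfl fun j _ => ?_
          ring
        rw [hneg] at h0
        linarith
      rw [halt, mul_one]
    rw [expand, drop, key]

private lemma exp_int_aux {c : ℝ} (hc : 0 < c) :
    ∫ x in Set.Ioi (0:ℝ), Real.exp (-(c*x)) = 1/c := by
  have h := integral_comp_mul_left_Ioi (fun x => Real.exp (-x)) 0 hc
  simp only [mul_zero, integral_exp_neg_Ioi, Real.exp_zero, smul_eq_mul, mul_one] at h
  simpa [one_div] using h

private lemma range_succ_insert_aux (s : ℕ) :
    Finset.range (s+1) = insert 0 (Finset.Icc 1 s) := by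
  ext j; simp [Finset.mem_range, Finset.mem_Icc, Finset.mem_insert]; omega

private lemma g_rep_aux {q : ℝ} (hq0 : 0 < q) (s : ℕ) (x : ℝ) :
    1 - (1 - Real.exp (Real.log q * x))^s
      = ∑ j ∈ Finset.Icc 1 s, ((-1:ℝ)^(j+1) * (s.choose j))
          * Real.exp (-((j:ℝ) * (-Real.log q)) * x) := by
  set u := Real.exp (Real.log q * x) with hu
  have hexp : ∀ j:ℕ, Real.exp (-((j:ℝ) * (-Real.log q)) * x) = u ^ j := by
    intro j
    rw [hu, ← Real.exp_nat_mul]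
    congr 1; ring
  have hb : (1 - u)^s = ∑ j ∈ Finset.range (s+1), (-u)^j * 1^(s-j) * (s.choose j) := by
    rw [show (1 - u) = (-u + 1) by ring, add_pow]
  rw [hb, range_succ_insert_aux, Finset.sum_insert (by simp)]
  simp only [pow_zero, one_pow, Nat.choose_zero_right, Nat.cast_one, mul_one, one_mul]
  have hR : ∑ j ∈ Finset.Icc 1 s, ((-1:ℝ)^(j+1) * (s.choose j))
      * Real.exp (-((j:ℝ) * (-Real.log q)) * x)
      = -∑ j ∈ Finset.Icc 1 s, (-u)^j * ((s.choose j):ℝ) := by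
    rw [← Finset.sum_neg_distrib]
    refine Finset.sum_congr rfl fun j _ => ?_
    rw [hexp j, neg_pow]
    ring
  rw [hR]
  ring

private lemma integrable_g_aux {q : ℝ} (hq0 : 0 < q) (hq1 : q < 1) (s : ℕ) :
    IntegrableOn (fun x => 1 - (1 - Real.exp (Real.log q * x))^s) (Set.Ioi 0) := by
  have hL : 0 < -Real.log q := by
    have := Real.log_neg hq0 hq1; linarith
  have : IntegrableOn (fun x => ∑ j ∈ Finset.Icc 1 s, ((-1:ℝ)^(j+1) * (s.choose j))
      * Real.exp (-((j:ℝ) * (-Real.log q)) * x)) (Set.Ioi 0) := by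
    apply MeasureTheory.integrable_finset_sum
    intro j hj
    have hj1 : 1 ≤ j := (Finset.mem_Icc.mp hj).1
    have hb : 0 < (j:ℝ) * (-Real.log q) := by
      have : (1:ℝ) ≤ j := by exact_mod_cast hj1
      nlinarith
    exact (exp_neg_integrableOn_Ioi 0 hb).const_mul _
  exact this.congr_fun (fun x _ => (g_rep_aux hq0 s x).symm) measurableSet_Ioi

private lemma integral_g_aux {q : ℝ} (hq0 : 0 < q) (hq1 : q < 1) (s : ℕ) :
    ∫ x in Set.Ioi (0:ℝ), (1 - (1 - Real.exp (Real.log q * x))^s)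
      = (1/(-Real.log q)) * ∑ i ∈ Finset.range s, 1/((i:ℝ)+1) := by
  have hL : 0 < -Real.log q := by
    have := Real.log_neg hq0 hq1; linarith
  rw [setIntegral_congr_fun measurableSet_Ioi (fun x _ => g_rep_aux hq0 s x)]
  rw [MeasureTheory.integral_finset_sum]
  · have hterm : ∀ j ∈ Finset.Icc 1 s,
        (∫ x in Set.Ioi (0:ℝ), ((-1:ℝ)^(j+1) * (s.choose j))
          * Real.exp (-((j:ℝ) * (-Real.log q)) * x))
        = (1/(-Real.log q)) * ((-1:ℝ)^(j+1) * (s.choose j) / j) := by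
      intro j hj
      have hj1 : 1 ≤ j := (Finset.mem_Icc.mp hj).1
      have hjR : (0:ℝ) < j := by exact_mod_cast hj1
      have hb : 0 < (j:ℝ) * (-Real.log q) := by nlinarith
      rw [MeasureTheory.integral_const_mul _ _]
      have : ∫ x in Set.Ioi (0:ℝ), Real.exp (-((j:ℝ) * (-Real.log q)) * x)
          = 1/((j:ℝ) * (-Real.log q)) := by
        have := exp_int_aux hb
        simpa [neg_mul] using this
      rw [this]
      field_simp
    rw [Finset.sum_congr rfl hterm, ← Finset.mul_sum]
    congr 1
    rw [← binom_harmonic_aux s, range_succ_insert_aux, Finset.sum_insert (by simp)]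
    simp
  · intro j hj
    have hj1 : 1 ≤ j := (Finset.mem_Icc.mp hj).1
    have hb : 0 < (j:ℝ) * (-Real.log q) := by
      have : (1:ℝ) ≤ j := by exact_mod_cast hj1
      nlinarith
    exact (exp_neg_integrableOn_Ioi 0 hb).const_mul _

private lemma nat_Ioc_union_aux : Set.Ioi (0:ℝ) = ⋃ k:ℕ, Set.Ioc (k:ℝ) ((k:ℝ)+1) := by
  ext x
  simp only [Set.mem_Ioi, Set.mem_iUnion, Set.mem_Ioc]
  constructor
  · intro hx
    have h1 : 1 ≤ ⌈x⌉₊ := Nat.one_le_ceil_iff.2 hx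
    refine ⟨⌈x⌉₊ - 1, ?_, ?_⟩
    · have hc : (↑(⌈x⌉₊ - 1) : ℝ) = (⌈x⌉₊ : ℝ) - 1 := by
        push_cast [Nat.cast_sub h1]; ring
      rw [hc]
      have := Nat.ceil_lt_add_one (le_of_lt hx)
      linarith
    · have hc : (↑(⌈x⌉₊ - 1) : ℝ) = (⌈x⌉₊ : ℝ) - 1 := by
        push_cast [Nat.cast_sub h1]; ring
      rw [hc]
      have := Nat.le_ceil x
      linarith
  · rintro ⟨k, hk1, -⟩
    have : (0:ℝ) ≤ k := Nat.cast_nonneg k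
    linarith

private lemma nat_Ioc_disj_aux :
    Pairwise (Function.onFun Disjoint (fun k:ℕ => Set.Ioc (k:ℝ) ((k:ℝ)+1))) := by
  intro i j hij
  apply Set.Ioc_disjoint_Ioc.2
  rcases hij.lt_or_gt with h | h
  · have : (i:ℝ)+1 ≤ j := by exact_mod_cast h
    calc min ((i:ℝ)+1) ((j:ℝ)+1) ≤ (i:ℝ)+1 := min_le_left _ _
      _ ≤ (j:ℝ) := this
      _ ≤ max (i:ℝ) (j:ℝ) := le_max_right _ _
  · have : (j:ℝ)+1 ≤ i := by exact_mod_cast h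
    calc min ((i:ℝ)+1) ((j:ℝ)+1) ≤ (j:ℝ)+1 := min_le_right _ _
      _ ≤ (i:ℝ) := this
      _ ≤ max (i:ℝ) (j:ℝ) := le_max_left _ _

private lemma sum_int_compare_aux {g : ℝ → ℝ} (hg : AntitoneOn g (Set.Ici 0))
    (h0 : ∀ x ∈ Set.Ici (0:ℝ), 0 ≤ g x)
    (hint : IntegrableOn g (Set.Ioi 0)) (hsum : Summable (fun k:ℕ => g k)) :
    (∫ x in Set.Ioi (0:ℝ), g x) ≤ (∑' k:ℕ, g k) ∧
      (∑' k:ℕ, g k) ≤ g 0 + ∫ x in Set.Ioi (0:ℝ), g x := by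
  have hIoc_sub : ∀ k:ℕ, Set.Ioc (k:ℝ) ((k:ℝ)+1) ⊆ Set.Ioi 0 := by
    intro k x hx
    have : (0:ℝ) ≤ k := Nat.cast_nonneg k
    exact lt_of_le_of_lt this hx.1
  have hint_piece : ∀ k:ℕ, IntegrableOn g (Set.Ioc (k:ℝ) ((k:ℝ)+1)) := fun k =>
    hint.mono_set (hIoc_sub k)
  have hvol : ∀ k:ℕ, (volume (Set.Ioc (k:ℝ) ((k:ℝ)+1))).toReal = 1 := by
    intro k
    rw [Real.volume_Ioc]
    simp
  have hub : ∀ k:ℕ, (∫ x in Set.Ioc (k:ℝ) ((k:ℝ)+1), g x) ≤ g k := by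
    intro k
    have hconst : IntegrableOn (fun _ => g k) (Set.Ioc (k:ℝ) ((k:ℝ)+1)) :=
      integrableOn_const (by rw [Real.volume_Ioc]; exact ENNReal.ofReal_ne_top) enorm_ne_top
    have := setIntegral_mono_on (hint_piece k) hconst measurableSet_Ioc
      (fun x hx => hg (Set.mem_Ici.2 (Nat.cast_nonneg k))
        (Set.mem_Ici.2 (le_of_lt (lt_of_le_of_lt (Nat.cast_nonneg k) hx.1))) (le_of_lt hx.1))
    rwa [setIntegral_const, measureReal_def, hvol, one_smul] at this
  have hlb : ∀ k:ℕ, g ((k:ℝ)+1) ≤ ∫ x in Set.Ioc (k:ℝ) ((k:ℝ)+1), g x := by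
    intro k
    have hconst : IntegrableOn (fun _ => g ((k:ℝ)+1)) (Set.Ioc (k:ℝ) ((k:ℝ)+1)) :=
      integrableOn_const (by rw [Real.volume_Ioc]; exact ENNReal.ofReal_ne_top) enorm_ne_top
    have hk1 : ((k:ℝ)+1) ∈ Set.Ici (0:ℝ) := by
      simp only [Set.mem_Ici]; positivity
    have := setIntegral_mono_on hconst (hint_piece k) measurableSet_Ioc
      (fun x hx => hg (Set.mem_Ici.2 (le_of_lt (lt_of_le_of_lt (Nat.cast_nonneg k) hx.1))) hk1 hx.2)
    rwa [setIntegral_const, measureReal_def, hvol, one_smul] at this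
  have hdecomp : (∫ x in Set.Ioi (0:ℝ), g x) = ∑' k:ℕ, ∫ x in Set.Ioc (k:ℝ) ((k:ℝ)+1), g x := by
    rw [nat_Ioc_union_aux] at hint ⊢
    exact integral_iUnion (fun k => measurableSet_Ioc) nat_Ioc_disj_aux hint
  have hnn : ∀ k:ℕ, 0 ≤ ∫ x in Set.Ioc (k:ℝ) ((k:ℝ)+1), g x := by
    intro k
    exact setIntegral_nonneg measurableSet_Ioc fun x hx =>
      h0 x (Set.mem_Ici.2 (le_of_lt (lt_of_le_of_lt (Nat.cast_nonneg k) hx.1)))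
  have hsum_piece : Summable (fun k:ℕ => ∫ x in Set.Ioc (k:ℝ) ((k:ℝ)+1), g x) :=
    Summable.of_nonneg_of_le hnn hub hsum
  constructor
  · rw [hdecomp]
    exact Summable.tsum_le_tsum hub hsum_piece hsum
  · have hshift : Summable (fun k:ℕ => g ((k:ℕ)+1 : ℕ)) := (summable_nat_add_iff 1).2 hsum
    have hsplit : (∑' k:ℕ, g k) = g 0 + ∑' k:ℕ, g ((k+1 : ℕ)) := by
      rw [Summable.tsum_eq_zero_add hsum]
      norm_num
    rw [hsplit, hdecomp]
    have : (∑' k:ℕ, g ((k+1:ℕ))) ≤ ∑' k:ℕ, ∫ x in Set.Ioc (k:ℝ) ((k:ℝ)+1), g x := by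
      apply Summable.tsum_le_tsum _ hshift hsum_piece
      intro k
      have : ((k+1:ℕ):ℝ) = (k:ℝ)+1 := by push_cast; ring
      rw [this]
      exact hlb k
    linarith

end EisenbergAux

set_option maxHeartbeats 1600000

/-- Eisenberg, 2008: Let `T_1, …, T_s` be i.i.d. geometric random
variables on `ℕ = {1,2,…}` with success probability `θ ∈ (0,1)`, i.e.
`P(T_i = k) = θ(1−θ)^{k−1}`. Then
`|E[max_i T_i] − (1/2 + (1/log(1/(1−θ))) ∑_{i=1}^s 1/i)| ≤ 1/2`. -/
theorem expected_max_geometric_eisenberg {Ω : Type*} {m0 : MeasurableSpace Ω}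
    (μ : Measure Ω) [IsProbabilityMeasure μ]
    (s : ℕ) (hs : 0 < s) (θ : ℝ) (hθ0 : 0 < θ) (hθ1 : θ < 1)
    (T : Fin s → Ω → ℕ)
    (hmeas : ∀ i, Measurable (T i))
    (hindep : iIndepFun T μ)
    (hgeom : ∀ i, ∀ k : ℕ, 1 ≤ k →
      μ {ω | T i ω = k} = ENNReal.ofReal (θ * (1 - θ) ^ (k - 1))) :
    |(∫ ω, ((Finset.univ.sup fun i => T i ω : ℕ) : ℝ) ∂μ) -
        (1 / 2 + (1 / Real.log (1 / (1 - θ))) *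
          ∑ i ∈ Finset.range s, 1 / ((i : ℝ) + 1))| ≤ 1 / 2 := by
  classical
  have hq0 : 0 < 1 - θ := by linarith
  have hq1 : 1 - θ < 1 := by linarith
  set q : ℝ := 1 - θ with hqdef
  set M : Ω → ℕ := fun ω => Finset.univ.sup fun i => T i ω with hMdef
  haveI : Nonempty (Fin s) := ⟨⟨0, hs⟩⟩
  -- measurability of M
  have hM_meas : Measurable M := by
    have hne : (Finset.univ : Finset (Fin s)).Nonempty := Finset.univ_nonempty
    have h1 : Measurable (Finset.univ.sup' hne fun i => T i) :=
      Finset.measurable_sup' hne (fun i _ => hmeas i)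
    have h2 : M = Finset.univ.sup' hne fun i => T i := by
      funext ω
      show (Finset.univ.sup fun i => T i ω) = _
      rw [← Finset.sup'_eq_sup hne]
      exact (Finset.sup'_apply hne _ ω).symm
    rw [h2]; exact h1
  -- events measurable
  have hA_meas : ∀ (i : Fin s) (k : ℕ), MeasurableSet {ω | T i ω = k} := fun i k =>
    hmeas i (measurableSet_singleton k)
  have hd : ∀ i : Fin s, Pairwise (Function.onFun Disjoint (fun k => {ω | T i ω = k})) := by
    intro i k l hkl
    rw [Function.onFun, Set.disjoint_left]
    intro ω h1 h2
    simp only [Set.mem_setOf_eq] at h1 h2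
    exact hkl (h1.symm.trans h2)
  -- total mass
  have htot : ∀ i : Fin s, (∑' k:ℕ, μ {ω | T i ω = k}) = 1 := by
    intro i
    rw [← measure_iUnion (hd i) (hA_meas i)]
    have : (⋃ k:ℕ, {ω | T i ω = k}) = Set.univ := by
      ext ω; simp
    rw [this, measure_univ]
  have hsumθ : Summable (fun k:ℕ => θ * q ^ k) :=
    (summable_geometric_of_lt_one hq0.le hq1).mul_left θ
  have htsumθ : (∑' k:ℕ, θ * q ^ k) = 1 := by
    rw [tsum_mul_left, tsum_geometric_of_lt_one hq0.le hq1]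
    have h1q : 1 - q = θ := by rw [hqdef]; ring
    rw [h1q]
    field_simp
  have hgeom' : ∀ (i : Fin s) (k : ℕ), μ {ω | T i ω = (k+1:ℕ)} = ENNReal.ofReal (θ * q ^ k) := by
    intro i k
    rw [hgeom i (k+1) (by omega)]
    congr 1
  -- no mass at zero
  have hzero : ∀ i : Fin s, μ {ω | T i ω = 0} = 0 := by
    intro i
    have h1 : (1:ℝ≥0∞) = μ {ω | T i ω = (0:ℕ)} + ∑' k:ℕ, μ {ω | T i ω = (k+1:ℕ)} := by
      have hsplit := tsum_eq_zero_add' (f := fun k:ℕ => μ {ω | T i ω = k}) ENNReal.summable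
      rw [htot i] at hsplit
      exact hsplit
    have h2 : (∑' k:ℕ, μ {ω | T i ω = (k+1:ℕ)}) = 1 := by
      rw [tsum_congr (hgeom' i),
        ← ENNReal.ofReal_tsum_of_nonneg (fun k => by positivity) hsumθ, htsumθ,
        ENNReal.ofReal_one]
    rw [h2] at h1
    exact (ENNReal.add_left_inj ENNReal.one_ne_top).1 (by rw [← h1, zero_add])
  -- geometric partial sums
  have hpart : ∀ k:ℕ, (∑ j ∈ Finset.range k, θ * q ^ j) = 1 - q ^ k := by
    intro k
    rw [← Finset.mul_sum, geom_sum_eq hq1.ne]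
    have h1q : θ = 1 - q := by rw [hqdef]; ring
    rw [h1q]
    have : q - 1 ≠ 0 := by intro h; apply hq1.ne; linarith
    field_simp
    ring
  -- CDF of each T i
  have hIic : ∀ (i : Fin s) (k:ℕ), μ ((T i)⁻¹' (Set.Iic k)) = ENNReal.ofReal (1 - q ^ k) := by
    intro i k
    have hset : (T i)⁻¹' (Set.Iic k) = ⋃ j ∈ Finset.range (k+1), {ω | T i ω = j} := by
      ext ω; simp [Nat.lt_succ_iff]
    rw [hset, measure_biUnion_finset (fun a _ b _ hab => hd i hab) (fun j _ => hA_meas i j),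
      Finset.sum_range_succ', hzero i, add_zero,
      Finset.sum_congr rfl (fun j _ => hgeom' i j),
      ← ENNReal.ofReal_sum_of_nonneg (fun j _ => mul_nonneg hθ0.le (pow_nonneg hq0.le j)), hpart k]
  -- CDF of the max, by independence
  have hqk1 : ∀ k:ℕ, q ^ k ≤ 1 := fun k => pow_le_one₀ hq0.le hq1.le
  have hprodIic : ∀ k:ℕ, μ (⋂ i, (T i)⁻¹' (Set.Iic k)) = ENNReal.ofReal ((1 - q^k)^s) := by
    intro k
    rw [hindep.meas_iInter (fun i => ⟨Set.Iic k, measurableSet_Iic, rfl⟩)]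
    rw [Finset.prod_congr rfl (fun (i : Fin s) _ => hIic i k), Finset.prod_const,
      Finset.card_univ, Fintype.card_fin,
      ← ENNReal.ofReal_pow (by linarith [hqk1 k])]
  have hMle : ∀ k:ℕ, {ω | M ω ≤ k} = ⋂ i, (T i)⁻¹' (Set.Iic k) := by
    intro k
    ext ω
    simp [hMdef, Finset.sup_le_iff, Set.mem_iInter]
  have hMmeas_le : ∀ k:ℕ, MeasurableSet {ω | M ω ≤ k} := fun k => by
    rw [hMle k]; exact MeasurableSet.iInter fun i => hmeas i measurableSet_Iic
  have hMmeas_lt : ∀ k:ℕ, MeasurableSet {ω | k < M ω} := by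
    intro k
    have : {ω | k < M ω} = {ω | M ω ≤ k}ᶜ := by ext ω; simp
    rw [this]; exact (hMmeas_le k).compl
  have htail : ∀ k:ℕ, μ {ω | k < M ω} = ENNReal.ofReal (1 - (1 - q^k)^s) := by
    intro k
    have hc : {ω | k < M ω} = {ω | M ω ≤ k}ᶜ := by ext ω; simp
    have hnn : (0:ℝ) ≤ (1 - q^k)^s := pow_nonneg (by linarith [hqk1 k]) s
    rw [hc, prob_compl_eq_one_sub (hMmeas_le k), hMle k, hprodIic k,
      ← ENNReal.ofReal_one, ← ENNReal.ofReal_sub _ hnn]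
  -- layer cake
  have hlc : (∫⁻ ω, ((M ω : ℕ) : ℝ≥0∞) ∂μ) = ∑' k:ℕ, μ {ω | k < M ω} := by
    have hpt : ∀ ω, ((M ω : ℕ) : ℝ≥0∞)
        = ∑' k:ℕ, Set.indicator {ω' | k < M ω'} (fun _ => (1:ℝ≥0∞)) ω := by
      intro ω
      have hind : ∀ k:ℕ, Set.indicator {ω' | k < M ω'} (fun _ => (1:ℝ≥0∞)) ω
          = if k < M ω then 1 else 0 := fun k => by
        simp [Set.indicator_apply]
      rw [tsum_congr hind, tsum_eq_sum (s := Finset.range (M ω))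
        (fun k hk => by rw [if_neg]; simpa using hk)]
      have : ∀ k ∈ Finset.range (M ω), (if k < M ω then (1:ℝ≥0∞) else 0) = 1 := by
        intro k hk; rw [if_pos (Finset.mem_range.mp hk)]
      rw [Finset.sum_congr rfl this, Finset.sum_const, Finset.card_range, nsmul_eq_mul, mul_one]
    rw [lintegral_congr hpt,
      lintegral_tsum (fun k => (measurable_const.indicator (hMmeas_lt k)).aemeasurable)]
    exact tsum_congr fun k => lintegral_indicator_one (hMmeas_lt k)
  -- real series facts
  have hg_nonneg : ∀ k:ℕ, (0:ℝ) ≤ 1 - (1 - q^k)^s := by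
    intro k
    have h1 : (1 - q^k)^s ≤ 1 := pow_le_one₀ (by linarith [hqk1 k]) (by
      have : 0 < q ^ k := pow_pos hq0 k
      linarith)
    linarith
  have hg_le : ∀ k:ℕ, 1 - (1 - q^k)^s ≤ (s:ℝ) * q^k := by
    intro k
    have h' : 1 + (s:ℝ) * -(q^k) ≤ (1 - q^k)^s := by
      rw [show (1:ℝ) - q^k = 1 + -(q^k) by ring]
      exact one_add_mul_le_pow (by linarith [hqk1 k]) s
    linarith
  have hgsum : Summable (fun k:ℕ => 1 - (1 - q^k)^s) :=
    Summable.of_nonneg_of_le hg_nonneg hg_le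
      ((summable_geometric_of_lt_one hq0.le hq1).mul_left _)
  have hS_nonneg : (0:ℝ) ≤ ∑' k:ℕ, (1 - (1 - q^k)^s) := tsum_nonneg hg_nonneg
  have htsum_ofReal : (∑' k:ℕ, μ {ω | k < M ω})
      = ENNReal.ofReal (∑' k:ℕ, (1 - (1 - q^k)^s)) := by
    rw [tsum_congr htail, ← ENNReal.ofReal_tsum_of_nonneg hg_nonneg hgsum]
  -- expectation equals the series
  have hint_eq : (∫ ω, ((M ω : ℕ) : ℝ) ∂μ) = ∑' k:ℕ, (1 - (1 - q^k)^s) := by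
    have haesm : AEStronglyMeasurable (fun ω => ((M ω : ℕ) : ℝ)) μ :=
      ((measurable_from_nat (f := (Nat.cast : ℕ → ℝ))).comp hM_meas).aestronglyMeasurable
    rw [MeasureTheory.integral_eq_lintegral_of_nonneg_ae
      (ae_of_all μ fun ω => by positivity) haesm]
    have : (∫⁻ ω, ENNReal.ofReal ((M ω : ℕ) : ℝ) ∂μ) = ∫⁻ ω, ((M ω : ℕ) : ℝ≥0∞) ∂μ :=
      lintegral_congr fun ω => ENNReal.ofReal_natCast _
    rw [this, hlc, htsum_ofReal, ENNReal.toReal_ofReal hS_nonneg]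
  -- analytic comparison
  have hL : 0 < -Real.log q := by
    have := Real.log_neg hq0 hq1; linarith
  set gc : ℝ → ℝ := fun x => 1 - (1 - Real.exp (Real.log q * x))^s with hgcdef
  have hgc_at_nat : ∀ k:ℕ, gc (k:ℝ) = 1 - (1 - q^k)^s := by
    intro k
    rw [hgcdef]
    simp only
    rw [mul_comm, Real.exp_nat_mul, Real.exp_log hq0]
  have hlogq_neg : Real.log q < 0 := Real.log_neg hq0 hq1
  have hu_le_one : ∀ x ∈ Set.Ici (0:ℝ), Real.exp (Real.log q * x) ≤ 1 := by
    intro x hx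
    rw [Real.exp_le_one_iff]
    have hx0 : (0:ℝ) ≤ x := hx
    nlinarith
  have hgc_anti : AntitoneOn gc (Set.Ici 0) := by
    intro x hx y hy hxy
    rw [hgcdef]
    simp only
    have hux : Real.exp (Real.log q * y) ≤ Real.exp (Real.log q * x) := by
      apply Real.exp_le_exp.2
      nlinarith [Set.mem_Ici.1 hx, Set.mem_Ici.1 hy]
    have h1 : 0 ≤ 1 - Real.exp (Real.log q * x) := by
      linarith [hu_le_one x hx]
    have := pow_le_pow_left₀ h1 (by linarith : 1 - Real.exp (Real.log q * x) ≤ 1 - Real.exp (Real.log q * y)) s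
    linarith
  have hgc_nonneg : ∀ x ∈ Set.Ici (0:ℝ), 0 ≤ gc x := by
    intro x hx
    rw [hgcdef]
    simp only
    have h1 : 0 ≤ 1 - Real.exp (Real.log q * x) := by linarith [hu_le_one x hx]
    have h2 : (1 - Real.exp (Real.log q * x))^s ≤ 1 :=
      pow_le_one₀ h1 (by linarith [Real.exp_pos (Real.log q * x)])
    linarith
  have hgcsum : Summable (fun k:ℕ => gc k) := by
    apply Summable.congr hgsum
    intro k
    exact (hgc_at_nat k).symm
  have hcomp := sum_int_compare_aux hgc_anti hgc_nonneg (integrable_g_aux hq0 hq1 s) hgcsum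
  have hSeq : (∑' k:ℕ, gc k) = ∑' k:ℕ, (1 - (1 - q^k)^s) := tsum_congr hgc_at_nat
  have hgc0 : gc 0 = 1 := by
    rw [hgcdef]
    simp [zero_pow hs.ne']
  have hIval : (∫ x in Set.Ioi (0:ℝ), gc x)
      = (1/(-Real.log q)) * ∑ i ∈ Finset.range s, 1/((i:ℝ)+1) := integral_g_aux hq0 hq1 s
  -- put it together
  have hLeq : Real.log (1 / (1 - θ)) = -Real.log q := by
    rw [one_div, Real.log_inv]
  rw [hSeq, hgc0, hIval] at hcomp
  have hrw : (∫ ω, ((Finset.univ.sup fun i => T i ω : ℕ) : ℝ) ∂μ)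
      = ∫ ω, ((M ω : ℕ) : ℝ) ∂μ := rfl
  rw [hrw, hint_eq, hLeq]
  rw [abs_le]
  constructor
  · linarith [hcomp.1]
  · linarith [hcomp.2]
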